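/- arXiv:2112.01255 — 3 statements merged into one kernel-verified Lean document; each statement's English description precedes it below -/
import Mathlib

section
/- Let α ∈ (0,1), a ∈ ℂ with |a| = 1, and γ > 0. Then the scattering is reflection-less at the energy E* := ( 2^{1+α} γ Γ((3+α)/2) sin(πα/2) / ( Γ((1−α)/2)(1−cos(πα)) ) )^{2/(1+α)}: one has R_{α,a,γ}(E*) = 0. -/
open Filter Set

noncomputable section

/-- The denominator `D_{α,a,γ}(E) = E^{(1+α)/2} Γ((1-α)/2)(1+|a|²)
+ i γ 2^{1+α} e^{iπα/2} Γ((3+α)/2)`. -/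
def Dden (α : ℝ) (a : ℂ) (γ E : ℝ) : ℂ :=
  ((E ^ ((1 + α) / 2) : ℝ) : ℂ) * ((Real.Gamma ((1 - α) / 2) : ℝ) : ℂ)
      * ((1 + ‖a‖ ^ 2 : ℝ) : ℂ)
    + Complex.I * (γ : ℂ) * (((2 : ℝ) ^ (1 + α) : ℝ) : ℂ)
      * Complex.exp (Complex.I * (Real.pi : ℂ) * (α : ℂ) / 2)
      * ((Real.Gamma ((3 + α) / 2) : ℝ) : ℂ)

/-- The transmission coefficient
`T_{α,a,γ}(E) = | E^{(1+α)/2}(1+e^{iπα}) Γ((1-α)/2) conj(a) / D_{α,a,γ}(E) |²`. -/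
def Tcoef (α : ℝ) (a : ℂ) (γ E : ℝ) : ℝ :=
  ‖(((E ^ ((1 + α) / 2) : ℝ) : ℂ)
      * (1 + Complex.exp (Complex.I * (Real.pi : ℂ) * (α : ℂ)))
      * ((Real.Gamma ((1 - α) / 2) : ℝ) : ℂ) * (starRingEnd ℂ a) / Dden α a γ E)‖ ^ 2

/-- The reflection coefficient
`R_{α,a,γ}(E) = | (E^{(1+α)/2} Γ((1-α)/2)(1-|a|² e^{iπα})
+ i γ 2^{1+α} e^{iπα/2} Γ((3+α)/2)) / D_{α,a,γ}(E) |²`. -/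
def Rcoef (α : ℝ) (a : ℂ) (γ E : ℝ) : ℝ :=
  ‖((((E ^ ((1 + α) / 2) : ℝ) : ℂ) * ((Real.Gamma ((1 - α) / 2) : ℝ) : ℂ)
      * (1 - ((‖a‖ ^ 2 : ℝ) : ℂ) * Complex.exp (Complex.I * (Real.pi : ℂ) * (α : ℂ)))
    + Complex.I * (γ : ℂ) * (((2 : ℝ) ^ (1 + α) : ℝ) : ℂ)
      * Complex.exp (Complex.I * (Real.pi : ℂ) * (α : ℂ) / 2)
      * ((Real.Gamma ((3 + α) / 2) : ℝ) : ℂ)) / Dden α a γ E)‖ ^ 2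

/-- For `α ∈ (0,1)`, `|a| = 1` and `γ > 0`, the scattering is reflection-less at the energy
`E* = (2^{1+α} γ Γ((3+α)/2) sin(πα/2) / (Γ((1-α)/2)(1-cos(πα))))^{2/(1+α)}`. -/
theorem reflectionless_energy (α : ℝ) (hα : α ∈ Set.Ioo (0 : ℝ) 1)
    (a : ℂ) (ha : ‖a‖ = 1) (γ : ℝ) (hγ : 0 < γ) :
    Rcoef α a γ
      (((2 : ℝ) ^ (1 + α) * γ * Real.Gamma ((3 + α) / 2) * Real.sin (Real.pi * α / 2)
          / (Real.Gamma ((1 - α) / 2) * (1 - Real.cos (Real.pi * α)))) ^ (2 / (1 + α)))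
      = 0 := by
  obtain ⟨hα0, hα1⟩ := hα
  have hpi := Real.pi_pos
  set s := Real.sin (Real.pi * α / 2) with hs
  set c0 := Real.cos (Real.pi * α / 2) with hc0
  have hs_pos : 0 < s := Real.sin_pos_of_pos_of_lt_pi (by positivity) (by nlinarith)
  have hG1 : 0 < Real.Gamma ((1 - α) / 2) := Real.Gamma_pos_of_pos (by linarith)
  have hG2 : 0 < Real.Gamma ((3 + α) / 2) := Real.Gamma_pos_of_pos (by linarith)
  have hcos : 1 - Real.cos (Real.pi * α) = 2 * s ^ 2 := by
    have h2 : Real.pi * α = 2 * (Real.pi * α / 2) := by ring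
    rw [h2, Real.cos_two_mul]
    have := Real.sin_sq_add_cos_sq (Real.pi * α / 2)
    nlinarith [this]
  set K := (2 : ℝ) ^ (1 + α) with hK
  have hKpos : 0 < K := Real.rpow_pos_of_pos (by norm_num) _
  set c := K * γ * Real.Gamma ((3 + α) / 2) * s
      / (Real.Gamma ((1 - α) / 2) * (1 - Real.cos (Real.pi * α))) with hc
  have hcpos : 0 < c := by rw [hc, hcos]; positivity
  have h1α : (1 : ℝ) + α ≠ 0 := by linarith
  have hErg : (c ^ (2 / (1 + α))) ^ ((1 + α) / 2) = c := by
    rw [← Real.rpow_mul hcpos.le, show (2 / (1 + α)) * ((1 + α) / 2) = 1 by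
      field_simp, Real.rpow_one]
  have h2r : c * Real.Gamma ((1 - α) / 2) * (2 * s) = γ * K * Real.Gamma ((3 + α) / 2) := by
    rw [hc, hcos]
    field_simp
  have hz : Complex.exp (Complex.I * (Real.pi : ℂ) * (α : ℂ) / 2)
      = (c0 : ℂ) + (s : ℂ) * Complex.I := by
    have harg : Complex.I * (Real.pi : ℂ) * (α : ℂ) / 2
        = ((Real.pi * α / 2 : ℝ) : ℂ) * Complex.I := by push_cast; ring
    rw [harg, Complex.exp_mul_I, ← Complex.ofReal_cos, ← Complex.ofReal_sin]
  have hz2 : Complex.exp (Complex.I * (Real.pi : ℂ) * (α : ℂ))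
      = ((c0 : ℂ) + (s : ℂ) * Complex.I) ^ 2 := by
    rw [← hz, sq, ← Complex.exp_add]
    ring_nf
  have h1c : (s : ℂ) ^ 2 + (c0 : ℂ) ^ 2 = 1 := by
    exact_mod_cast Real.sin_sq_add_cos_sq (Real.pi * α / 2)
  have h2c : (c : ℂ) * ((Real.Gamma ((1 - α) / 2) : ℝ) : ℂ) * (2 * (s : ℂ))
      = (γ : ℂ) * (K : ℂ) * ((Real.Gamma ((3 + α) / 2) : ℝ) : ℂ) := by
    exact_mod_cast congrArg (fun x : ℝ => (x : ℂ)) h2r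
  simp only [Rcoef, ha]
  rw [hErg, pow_eq_zero_iff (two_ne_zero), norm_eq_zero, div_eq_zero_iff]
  left
  rw [hz, hz2]
  push_cast
  rw [← hK]
  linear_combination ((s : ℂ) - (c0 : ℂ) * Complex.I) * h2c
    - (c : ℂ) * ((Real.Gamma ((1 - α) / 2) : ℝ) : ℂ) * h1c
    + ((γ : ℂ) * (K : ℂ) * ((Real.Gamma ((3 + α) / 2) : ℝ) : ℂ) * (s : ℂ)
      - (c : ℂ) * ((Real.Gamma ((1 - α) / 2) : ℝ) : ℂ) * (s : ℂ) ^ 2) * Complex.I_sq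

end
end

section
/- For every α ∈ [0,1), a ∈ ℂ and γ ∈ ℝ, in the high-energy limit the scattering is independent of γ: lim_{E→+∞} T_{α,a,γ}(E) = 2|a|²(1+cos(πα)) / (1+|a|²)² and lim_{E→+∞} R_{α,a,γ}(E) = (1+|a|⁴−2|a|²cos(πα)) / (1+|a|²)². -/
open Filter Set

noncomputable section

/-- For every `α ∈ [0,1)`, `a ∈ ℂ`, `γ ∈ ℝ`, in the high-energy limit the scattering is
independent of `γ`: `T → 2|a|²(1+cos(πα))/(1+|a|²)²` and
`R → (1+|a|⁴-2|a|²cos(πα))/(1+|a|²)²` as `E → +∞`. -/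
theorem high_energy_limit (α : ℝ) (hα : α ∈ Set.Ico (0 : ℝ) 1) (a : ℂ) (γ : ℝ) :
    Tendsto (fun E : ℝ => Tcoef α a γ E) atTop
      (nhds (2 * ‖a‖ ^ 2 * (1 + Real.cos (Real.pi * α))
        / (1 + ‖a‖ ^ 2) ^ 2)) ∧
    Tendsto (fun E : ℝ => Rcoef α a γ E) atTop
      (nhds ((1 + ‖a‖ ^ 4 - 2 * ‖a‖ ^ 2 * Real.cos (Real.pi * α))
        / (1 + ‖a‖ ^ 2) ^ 2)) := by
  obtain ⟨hα0, hα1⟩ := hα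
  set p : ℝ := (1 + α) / 2 with hp
  have hppos : 0 < p := by rw [hp]; linarith
  set g : ℝ := Real.Gamma ((1 - α) / 2) with hg
  have hgpos : 0 < g := Real.Gamma_pos_of_pos (by linarith)
  set e : ℂ := Complex.exp (Complex.I * (Real.pi : ℂ) * (α : ℂ)) with he
  set c3 : ℂ := Complex.I * (γ : ℂ) * (((2 : ℝ) ^ (1 + α) : ℝ) : ℂ)
      * Complex.exp (Complex.I * (Real.pi : ℂ) * (α : ℂ) / 2)
      * ((Real.Gamma ((3 + α) / 2) : ℝ) : ℂ) with hc3
  set c2 : ℂ := (g : ℂ) * ((1 + ‖a‖ ^ 2 : ℝ) : ℂ) with hc2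
  have habs_pos : (0:ℝ) < 1 + ‖a‖ ^ 2 := by positivity
  have hc2ne : c2 ≠ 0 := by
    rw [hc2]
    simp only [ne_eq, mul_eq_zero, Complex.ofReal_eq_zero]
    push_neg
    exact ⟨hgpos.ne', habs_pos.ne'⟩
  -- the inverse power tends to 0
  have hinv : Tendsto (fun E : ℝ => (((E ^ p)⁻¹ : ℝ) : ℂ)) atTop (nhds 0) := by
    have h1 : Tendsto (fun E : ℝ => (E ^ p)⁻¹) atTop (nhds 0) :=
      (tendsto_rpow_atTop hppos).inv_tendsto_atTop
    have := (Complex.continuous_ofReal.tendsto 0).comp h1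
    simpa [Function.comp_def] using this
  have hden : Tendsto (fun E : ℝ => c2 + c3 * (((E ^ p)⁻¹ : ℝ) : ℂ)) atTop (nhds c2) := by
    have := (hinv.const_mul c3).const_add c2
    simpa using this
  -- eventual rewriting of Dden
  have hDden : ∀ E : ℝ, 0 < E →
      Dden α a γ E = ((E ^ p : ℝ) : ℂ) * (c2 + c3 * (((E ^ p)⁻¹ : ℝ) : ℂ)) := by
    intro E hE
    have hEp : (E : ℝ) ^ p ≠ 0 := (Real.rpow_pos_of_pos hE p).ne'
    have hEpC : ((E ^ p : ℝ) : ℂ) ≠ 0 := by exact_mod_cast hEp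
    rw [Dden, hc2, hc3]
    push_cast
    field_simp
    ring
  have hT : ∀ E : ℝ, 0 < E →
      Tcoef α a γ E =
        ‖(((1 + e) * (g : ℂ) * (starRingEnd ℂ a))
          / (c2 + c3 * (((E ^ p)⁻¹ : ℝ) : ℂ)))‖ ^ 2 := by
    intro E hE
    have hEp : (E : ℝ) ^ p ≠ 0 := (Real.rpow_pos_of_pos hE p).ne'
    have hEpC : ((E ^ p : ℝ) : ℂ) ≠ 0 := by exact_mod_cast hEp
    rw [Tcoef, hDden E hE]
    congr 2
    rw [show ((E ^ p : ℝ) : ℂ) * (1 + e) * (g : ℂ) * (starRingEnd ℂ a)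
        = ((E ^ p : ℝ) : ℂ) * ((1 + e) * (g : ℂ) * (starRingEnd ℂ a)) by ring]
    exact mul_div_mul_left _ _ hEpC
  have hR : ∀ E : ℝ, 0 < E →
      Rcoef α a γ E =
        ‖(((g : ℂ) * (1 - ((‖a‖ ^ 2 : ℝ) : ℂ) * e)
            + c3 * (((E ^ p)⁻¹ : ℝ) : ℂ))
          / (c2 + c3 * (((E ^ p)⁻¹ : ℝ) : ℂ)))‖ ^ 2 := by
    intro E hE
    have hEp : (E : ℝ) ^ p ≠ 0 := (Real.rpow_pos_of_pos hE p).ne'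
    have hEpC : ((E ^ p : ℝ) : ℂ) ≠ 0 := by exact_mod_cast hEp
    rw [Rcoef, hDden E hE]
    congr 2
    rw [show ((E ^ p : ℝ) : ℂ) * (g : ℂ) * (1 - ((‖a‖ ^ 2 : ℝ) : ℂ) * e) + c3
        = ((E ^ p : ℝ) : ℂ) * (((g : ℂ) * (1 - ((‖a‖ ^ 2 : ℝ) : ℂ) * e))
            + c3 * (((E ^ p)⁻¹ : ℝ) : ℂ)) by
      push_cast
      field_simp]
    exact mul_div_mul_left _ _ hEpC
  -- the values of e
  have hesq : ‖(1 + e)‖ ^ 2 = 2 * (1 + Real.cos (Real.pi * α)) := by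
    have he' : e = Complex.exp (((Real.pi * α : ℝ) : ℂ) * Complex.I) := by
      rw [he]; congr 1; push_cast; ring
    rw [Complex.sq_norm, Complex.normSq_apply, he']
    simp only [Complex.add_re, Complex.add_im, Complex.one_re, Complex.one_im,
      Complex.exp_ofReal_mul_I_re, Complex.exp_ofReal_mul_I_im]
    nlinarith [Real.sin_sq_add_cos_sq (Real.pi * α)]
  have hesq' : ‖(1 - ((‖a‖ ^ 2 : ℝ) : ℂ) * e)‖ ^ 2
      = 1 + ‖a‖ ^ 4 - 2 * ‖a‖ ^ 2 * Real.cos (Real.pi * α) := by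
    have he' : e = Complex.exp (((Real.pi * α : ℝ) : ℂ) * Complex.I) := by
      rw [he]; congr 1; push_cast; ring
    rw [Complex.sq_norm, Complex.normSq_apply, he']
    simp only [Complex.sub_re, Complex.sub_im, Complex.one_re, Complex.one_im,
      Complex.mul_re, Complex.mul_im, Complex.ofReal_re, Complex.ofReal_im,
      Complex.exp_ofReal_mul_I_re, Complex.exp_ofReal_mul_I_im]
    linear_combination ‖a‖ ^ 4 * Real.sin_sq_add_cos_sq (Real.pi * α)
  constructor
  · have key : Tendsto (fun E : ℝ =>
        ‖(((1 + e) * (g : ℂ) * (starRingEnd ℂ a))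
          / (c2 + c3 * (((E ^ p)⁻¹ : ℝ) : ℂ)))‖ ^ 2) atTop
        (nhds (‖(((1 + e) * (g : ℂ) * (starRingEnd ℂ a)) / c2)‖ ^ 2)) := by
      exact ((continuous_norm.tendsto _).comp
        (tendsto_const_nhds.div hden hc2ne)).pow 2
    have hval : ‖(((1 + e) * (g : ℂ) * (starRingEnd ℂ a)) / c2)‖ ^ 2
        = 2 * ‖a‖ ^ 2 * (1 + Real.cos (Real.pi * α))
          / (1 + ‖a‖ ^ 2) ^ 2 := by
      rw [norm_div, norm_mul, norm_mul, div_pow, mul_pow, mul_pow, hesq, hc2, norm_mul]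
      simp only [Complex.norm_real, Real.norm_eq_abs, Complex.norm_conj, mul_pow]
      rw [abs_of_pos hgpos, abs_of_pos habs_pos]
      field_simp
    rw [hval] at key
    refine key.congr' ?_
    filter_upwards [eventually_gt_atTop 0] with E hE
    exact (hT E hE).symm
  · have hnum : Tendsto (fun E : ℝ =>
        ((g : ℂ) * (1 - ((‖a‖ ^ 2 : ℝ) : ℂ) * e) + c3 * (((E ^ p)⁻¹ : ℝ) : ℂ)))
        atTop (nhds ((g : ℂ) * (1 - ((‖a‖ ^ 2 : ℝ) : ℂ) * e))) := by
      have := (hinv.const_mul c3).const_add ((g : ℂ) * (1 - ((‖a‖ ^ 2 : ℝ) : ℂ) * e))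
      simpa using this
    have key : Tendsto (fun E : ℝ =>
        ‖(((g : ℂ) * (1 - ((‖a‖ ^ 2 : ℝ) : ℂ) * e)
            + c3 * (((E ^ p)⁻¹ : ℝ) : ℂ))
          / (c2 + c3 * (((E ^ p)⁻¹ : ℝ) : ℂ)))‖ ^ 2) atTop
        (nhds (‖(((g : ℂ) * (1 - ((‖a‖ ^ 2 : ℝ) : ℂ) * e)) / c2)‖ ^ 2)) := by
      exact ((continuous_norm.tendsto _).comp (hnum.div hden hc2ne)).pow 2
    have hval : ‖(((g : ℂ) * (1 - ((‖a‖ ^ 2 : ℝ) : ℂ) * e)) / c2)‖ ^ 2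
        = (1 + ‖a‖ ^ 4 - 2 * ‖a‖ ^ 2 * Real.cos (Real.pi * α))
          / (1 + ‖a‖ ^ 2) ^ 2 := by
      rw [norm_div, norm_mul, div_pow, mul_pow, hesq', hc2, norm_mul]
      simp only [Complex.norm_real, Real.norm_eq_abs, mul_pow]
      rw [abs_of_pos hgpos, abs_of_pos habs_pos]
      field_simp
    rw [hval] at key
    refine key.congr' ?_
    filter_upwards [eventually_gt_atTop 0] with E hE
    exact (hR E hE).symm

end
end

section
/- For every α ∈ [0,1), a ∈ ℂ and γ ∈ ℝ with γ ≠ 0, in the low-energy limit one has lim_{E→0^+} T_{α,a,γ}(E) = 0 and lim_{E→0^+} R_{α,a,γ}(E) = 1; moreover, for α ∈ [0,1) at the bridging parameters a = 1, γ = 0 the coefficients are T_{α,1,0}(E) = (1+cos(πα))/2 and R_{α,1,0}(E) = (1−cos(πα))/2 for every E > 0. -/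
open Filter Set

noncomputable section

/-- For every `α ∈ [0,1)`, `a ∈ ℂ` and `γ ≠ 0`, in the low-energy limit `T → 0` and `R → 1`
as `E → 0⁺`; moreover at the bridging parameters `a = 1`, `γ = 0` one has
`T = (1+cos(πα))/2` and `R = (1-cos(πα))/2` for every `E > 0`. -/
theorem low_energy_limit_and_bridging (α : ℝ) (hα : α ∈ Set.Ico (0 : ℝ) 1) :
    (∀ (a : ℂ) (γ : ℝ), γ ≠ 0 →
      Tendsto (fun E : ℝ => Tcoef α a γ E) (nhdsWithin 0 (Set.Ioi 0)) (nhds 0) ∧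
      Tendsto (fun E : ℝ => Rcoef α a γ E) (nhdsWithin 0 (Set.Ioi 0)) (nhds 1)) ∧
    (∀ E : ℝ, 0 < E →
      Tcoef α 1 0 E = (1 + Real.cos (Real.pi * α)) / 2 ∧
      Rcoef α 1 0 E = (1 - Real.cos (Real.pi * α)) / 2) := by
  obtain ⟨hα0, hα1⟩ := hα
  have hp : 0 < (1 + α) / 2 := by linarith
  have hΓ1 : 0 < Real.Gamma ((1 - α) / 2) := Real.Gamma_pos_of_pos (by linarith)
  have hΓ3 : 0 < Real.Gamma ((3 + α) / 2) := Real.Gamma_pos_of_pos (by linarith)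
  -- the common limit fact: E^((1+α)/2) → 0 as E → 0⁺ (as a complex number)
  have hE : Tendsto (fun E : ℝ => ((E ^ ((1 + α) / 2) : ℝ) : ℂ))
      (nhdsWithin 0 (Set.Ioi 0)) (nhds 0) := by
    have h1 : Tendsto (fun E : ℝ => E ^ ((1 + α) / 2)) (nhdsWithin 0 (Set.Ioi 0)) (nhds 0) := by
      have h := (Real.continuousAt_rpow_const 0 ((1 + α) / 2) (Or.inr hp.le)).tendsto
      rw [Real.zero_rpow hp.ne'] at h
      exact h.mono_left nhdsWithin_le_nhds
    have := (Complex.continuous_ofReal.tendsto 0).comp h1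
    exact this
  constructor
  · intro a γ hγ
    set C : ℂ := Complex.I * (γ : ℂ) * (((2 : ℝ) ^ (1 + α) : ℝ) : ℂ)
      * Complex.exp (Complex.I * (Real.pi : ℂ) * (α : ℂ) / 2)
      * ((Real.Gamma ((3 + α) / 2) : ℝ) : ℂ) with hC
    have hCne : C ≠ 0 := by
      rw [hC]
      apply mul_ne_zero
      apply mul_ne_zero
      apply mul_ne_zero
      apply mul_ne_zero
      · exact Complex.I_ne_zero
      · exact_mod_cast hγ
      · exact_mod_cast (Real.rpow_pos_of_pos (by norm_num) (1 + α)).ne'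
      · exact Complex.exp_ne_zero _
      · exact_mod_cast hΓ3.ne'
    have hD : Tendsto (fun E : ℝ => Dden α a γ E) (nhdsWithin 0 (Set.Ioi 0)) (nhds C) := by
      have h0 : Tendsto (fun E : ℝ => ((E ^ ((1 + α) / 2) : ℝ) : ℂ)
          * ((Real.Gamma ((1 - α) / 2) : ℝ) : ℂ) * ((1 + ‖a‖ ^ 2 : ℝ) : ℂ))
          (nhdsWithin 0 (Set.Ioi 0)) (nhds 0) := by
        simpa using (hE.mul_const _).mul_const _
      have := h0.add (tendsto_const_nhds (x := C))
      simpa [Dden, hC] using this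
    constructor
    · -- T → 0
      have hnum : Tendsto (fun E : ℝ => ((E ^ ((1 + α) / 2) : ℝ) : ℂ)
          * (1 + Complex.exp (Complex.I * (Real.pi : ℂ) * (α : ℂ)))
          * ((Real.Gamma ((1 - α) / 2) : ℝ) : ℂ) * (starRingEnd ℂ a))
          (nhdsWithin 0 (Set.Ioi 0)) (nhds 0) := by
        simpa using ((hE.mul_const _).mul_const _).mul_const _
      have hdiv := hnum.div hD hCne
      have habs := ((continuous_norm.tendsto _).comp hdiv).pow 2
      simpa [Tcoef, zero_div] using habs
    · -- R → 1
      have hnum : Tendsto (fun E : ℝ => ((E ^ ((1 + α) / 2) : ℝ) : ℂ)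
          * ((Real.Gamma ((1 - α) / 2) : ℝ) : ℂ)
          * (1 - ((‖a‖ ^ 2 : ℝ) : ℂ)
              * Complex.exp (Complex.I * (Real.pi : ℂ) * (α : ℂ))) + C)
          (nhdsWithin 0 (Set.Ioi 0)) (nhds C) := by
        have h0 : Tendsto (fun E : ℝ => ((E ^ ((1 + α) / 2) : ℝ) : ℂ)
            * ((Real.Gamma ((1 - α) / 2) : ℝ) : ℂ)
            * (1 - ((‖a‖ ^ 2 : ℝ) : ℂ)
                * Complex.exp (Complex.I * (Real.pi : ℂ) * (α : ℂ))))
            (nhdsWithin 0 (Set.Ioi 0)) (nhds 0) := by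
          simpa using (hE.mul_const _).mul_const _
        simpa using h0.add (tendsto_const_nhds (x := C))
      have hdiv := hnum.div hD hCne
      have habs := ((continuous_norm.tendsto _).comp hdiv).pow 2
      rw [div_self hCne] at habs
      simpa [Rcoef, hC] using habs
  · -- bridging: a = 1, γ = 0
    intro E hE'
    have hpE : (0 : ℝ) < E ^ ((1 + α) / 2) := Real.rpow_pos_of_pos hE' _
    have hpne : ((E ^ ((1 + α) / 2) : ℝ) : ℂ) ≠ 0 := by exact_mod_cast hpE.ne'
    have hΓne : ((Real.Gamma ((1 - α) / 2) : ℝ) : ℂ) ≠ 0 := by exact_mod_cast hΓ1.ne'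
    have hDden : Dden α 1 0 E = ((E ^ ((1 + α) / 2) : ℝ) : ℂ)
        * ((Real.Gamma ((1 - α) / 2) : ℝ) : ℂ) * 2 := by
      simp only [Dden, map_one, norm_one, one_pow, Complex.ofReal_zero, mul_zero, zero_mul, add_zero]
      push_cast
      ring
    have heexp : Complex.exp (Complex.I * (Real.pi : ℂ) * (α : ℂ))
        = ((Real.cos (Real.pi * α) : ℝ) : ℂ) + ((Real.sin (Real.pi * α) : ℝ) : ℂ) * Complex.I := by
      rw [show Complex.I * (Real.pi : ℂ) * (α : ℂ)
          = (((Real.pi * α : ℝ) : ℂ)) * Complex.I by push_cast; ring,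
        Complex.exp_mul_I]
      push_cast [Complex.ofReal_cos, Complex.ofReal_sin]
      ring
    constructor
    · have key : ((E ^ ((1 + α) / 2) : ℝ) : ℂ)
          * (1 + Complex.exp (Complex.I * (Real.pi : ℂ) * (α : ℂ)))
          * ((Real.Gamma ((1 - α) / 2) : ℝ) : ℂ) * (starRingEnd ℂ 1) / Dden α 1 0 E
          = (1 + Complex.exp (Complex.I * (Real.pi : ℂ) * (α : ℂ))) / 2 := by
        rw [hDden, map_one]
        field_simp
      rw [Tcoef, key, heexp]
      rw [show (1 : ℂ) + (((Real.cos (Real.pi * α) : ℝ) : ℂ)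
            + ((Real.sin (Real.pi * α) : ℝ) : ℂ) * Complex.I)
          = ((1 + Real.cos (Real.pi * α) : ℝ) : ℂ)
            + ((Real.sin (Real.pi * α) : ℝ) : ℂ) * Complex.I by push_cast; ring]
      rw [norm_div, div_pow, Complex.sq_norm, Complex.normSq_add_mul_I]
      have hs := Real.sin_sq_add_cos_sq (Real.pi * α)
      norm_num
      nlinarith [hs]
    · have key : (((E ^ ((1 + α) / 2) : ℝ) : ℂ) * ((Real.Gamma ((1 - α) / 2) : ℝ) : ℂ)
          * (1 - ((‖(1 : ℂ)‖ ^ 2 : ℝ) : ℂ)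
              * Complex.exp (Complex.I * (Real.pi : ℂ) * (α : ℂ)))
          + Complex.I * ((0 : ℝ) : ℂ) * (((2 : ℝ) ^ (1 + α) : ℝ) : ℂ)
            * Complex.exp (Complex.I * (Real.pi : ℂ) * (α : ℂ) / 2)
            * ((Real.Gamma ((3 + α) / 2) : ℝ) : ℂ)) / Dden α 1 0 E
          = (1 - Complex.exp (Complex.I * (Real.pi : ℂ) * (α : ℂ))) / 2 := by
        rw [hDden]
        simp only [map_one, norm_one, one_pow, Complex.ofReal_one, one_mul, Complex.ofReal_zero,
          mul_zero, zero_mul, add_zero]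
        field_simp
      rw [Rcoef, key, heexp]
      rw [show (1 : ℂ) - (((Real.cos (Real.pi * α) : ℝ) : ℂ)
            + ((Real.sin (Real.pi * α) : ℝ) : ℂ) * Complex.I)
          = ((1 - Real.cos (Real.pi * α) : ℝ) : ℂ)
            + ((-Real.sin (Real.pi * α) : ℝ) : ℂ) * Complex.I by push_cast; ring]
      rw [norm_div, div_pow, Complex.sq_norm, Complex.normSq_add_mul_I]
      have hs := Real.sin_sq_add_cos_sq (Real.pi * α)
      norm_num
      nlinarith [hs]

end
end
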